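/- Let 𝒯 be the probability distribution on simple graphs with vertex set {1,2,3} that picks uniformly at random one of the three graphs having exactly one edge. Then 𝒯 is subgraph independent, but 𝒯 is not the induced distribution of any coloring model on 3 vertices. -/

import Mathlib

open scoped Classical

noncomputable def pr {n : ℕ} (μ : SimpleGraph (Fin n) → ℝ) (P : SimpleGraph (Fin n) → Prop) : ℝ :=
  ∑ G : SimpleGraph (Fin n), if P G then μ G else 0

def IsDist {n : ℕ} (μ : SimpleGraph (Fin n) → ℝ) : Prop :=
  (∀ G, 0 ≤ μ G) ∧ ∑ G : SimpleGraph (Fin n), μ G = 1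

def SubgraphIndep {n : ℕ} (μ : SimpleGraph (Fin n) → ℝ) : Prop :=
  ∀ V W : Set (Fin n), Disjoint V W →
    ∀ (HV : SimpleGraph V) (HW : SimpleGraph W),
      pr μ (fun G => G.induce V = HV ∧ G.induce W = HW)
        = pr μ (fun G => G.induce V = HV) * pr μ (fun G => G.induce W = HW)

structure ColoringModel (n : ℕ) where
  Ω : Fin n → Type
  fin : ∀ v, Fintype (Ω v)
  p : ∀ v, Ω v → ℝ
  nonneg : ∀ v ω, 0 ≤ p v ω
  sum_one : ∀ v, ∑ ω ∈ @Finset.univ (Ω v) (fin v), p v ω = 1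
  f : ∀ u v : Fin n, Ω u → Ω v → Bool
  symm : ∀ u v x y, f u v x y = f v u y x

def ColoringModel.graph {n : ℕ} (M : ColoringModel n) (ω : ∀ v, M.Ω v) :
    SimpleGraph (Fin n) where
  Adj u v := u ≠ v ∧ M.f u v (ω u) (ω v) = true
  symm := ⟨by
    rintro u v ⟨h1, h2⟩
    refine ⟨h1.symm, ?_⟩
    rw [M.symm]
    exact h2⟩
  loopless := ⟨fun u h => h.1 rfl⟩

noncomputable def ColoringModel.pr {n : ℕ} (M : ColoringModel n)
    (P : SimpleGraph (Fin n) → Prop) : ℝ :=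
  letI := M.fin
  ∑ ω : (∀ v, M.Ω v), if P (M.graph ω) then ∏ v, M.p v (ω v) else 0

noncomputable def ColoringModel.dist {n : ℕ} (M : ColoringModel n)
    (G : SimpleGraph (Fin n)) : ℝ :=
  M.pr (fun H => H = G)

noncomputable def T3 : SimpleGraph (Fin 3) → ℝ :=
  fun G => if Nat.card G.edgeSet = 1 then 1 / 3 else 0

/-! ### Auxiliary definitions and lemmas -/

/-- The graph on `Fin 3` with the single edge `{a, b}`. -/
def Egr (a b : Fin 3) : SimpleGraph (Fin 3) := SimpleGraph.fromEdgeSet {s(a,b)}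

lemma Egr_adj (a b u v : Fin 3) : (Egr a b).Adj u v ↔ (s(u,v) = s(a,b) ∧ u ≠ v) := by
  simp [Egr, SimpleGraph.fromEdgeSet_adj]

lemma Egr_card (a b : Fin 3) (h : a ≠ b) : Nat.card (Egr a b).edgeSet = 1 := by
  rw [Nat.card_coe_set_eq, Egr, SimpleGraph.edgeSet_fromEdgeSet,
    sdiff_eq_left.2 ?_]
  · exact Set.ncard_singleton _
  · rw [Set.disjoint_left]
    rintro e rfl he
    exact h (Sym2.isDiag_iff_proj_eq |>.mp he)

lemma sym2_cases : ∀ e : Sym2 (Fin 3), ¬e.IsDiag → e = s(0,1) ∨ e = s(0,2) ∨ e = s(1,2) := by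
  decide

lemma card_one_iff (G : SimpleGraph (Fin 3)) :
    Nat.card G.edgeSet = 1 ↔ G = Egr 0 1 ∨ G = Egr 0 2 ∨ G = Egr 1 2 := by
  constructor
  · intro h
    rw [Nat.card_coe_set_eq, Set.ncard_eq_one] at h
    obtain ⟨e, he⟩ := h
    have hed : ¬e.IsDiag :=
      SimpleGraph.not_isDiag_of_mem_edgeSet G (he ▸ rfl)
    have hG : G = SimpleGraph.fromEdgeSet {e} := by
      conv_lhs => rw [← SimpleGraph.fromEdgeSet_edgeSet G]
      rw [he]
    rcases sym2_cases e hed with rfl | rfl | rfl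
    · exact Or.inl hG
    · exact Or.inr (Or.inl hG)
    · exact Or.inr (Or.inr hG)
  · rintro (rfl | rfl | rfl)
    · exact Egr_card 0 1 (by decide)
    · exact Egr_card 0 2 (by decide)
    · exact Egr_card 1 2 (by decide)

lemma Egr_ne_01_02 : Egr 0 1 ≠ Egr 0 2 := by
  intro h
  have h1 : (Egr 0 1).Adj 0 1 := by rw [Egr_adj]; exact ⟨rfl, by decide⟩
  rw [h, Egr_adj] at h1
  exact absurd h1.1 (by decide)

lemma Egr_ne_01_12 : Egr 0 1 ≠ Egr 1 2 := by
  intro h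
  have h1 : (Egr 0 1).Adj 0 1 := by rw [Egr_adj]; exact ⟨rfl, by decide⟩
  rw [h, Egr_adj] at h1
  exact absurd h1.1 (by decide)

lemma Egr_ne_02_12 : Egr 0 2 ≠ Egr 1 2 := by
  intro h
  have h1 : (Egr 0 2).Adj 0 2 := by rw [Egr_adj]; exact ⟨rfl, by decide⟩
  rw [h, Egr_adj] at h1
  exact absurd h1.1 (by decide)

lemma sum_T3 : ∑ G : SimpleGraph (Fin 3), T3 G = 1 := by
  have key : ∀ G : SimpleGraph (Fin 3), T3 G =
      (if G = Egr 0 1 then (1/3 : ℝ) else 0) + (if G = Egr 0 2 then (1/3 : ℝ) else 0)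
        + (if G = Egr 1 2 then (1/3 : ℝ) else 0) := by
    intro G
    unfold T3
    by_cases h : Nat.card G.edgeSet = 1
    · rw [if_pos h]
      rcases (card_one_iff G).mp h with rfl | rfl | rfl
      · rw [if_pos rfl, if_neg Egr_ne_01_02, if_neg Egr_ne_01_12]; ring
      · rw [if_neg (Ne.symm Egr_ne_01_02), if_pos rfl, if_neg Egr_ne_02_12]; ring
      · rw [if_neg (Ne.symm Egr_ne_01_12), if_neg (Ne.symm Egr_ne_02_12), if_pos rfl]; ring
    · rw [if_neg h]
      have := (card_one_iff G).not.mp h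
      push_neg at this
      rw [if_neg this.1, if_neg this.2.1, if_neg this.2.2]; ring
  rw [Finset.sum_congr rfl (fun G _ => key G)]
  rw [Finset.sum_add_distrib, Finset.sum_add_distrib]
  simp [Finset.sum_ite_eq']
  norm_num

lemma pr_congr {n : ℕ} (μ : SimpleGraph (Fin n) → ℝ) {P Q : SimpleGraph (Fin n) → Prop}
    (h : ∀ G, P G ↔ Q G) : pr μ P = pr μ Q := by
  unfold pr
  exact Finset.sum_congr rfl fun G _ => if_congr (h G) rfl rfl

lemma pr_T3_true : pr T3 (fun _ => True) = 1 := by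
  unfold pr; simpa using sum_T3

lemma subsingleton_graph {S : Set (Fin 3)} (hS : S.Subsingleton) :
    Subsingleton (SimpleGraph ↥S) := by
  constructor
  intro G H
  ext a b
  have hab : a = b := Subtype.ext (hS a.2 b.2)
  constructor
  · intro h; exact absurd hab h.ne
  · intro h; exact absurd hab h.ne

lemma one_subsingleton {V W : Set (Fin 3)} (h : Disjoint V W) :
    V.Subsingleton ∨ W.Subsingleton := by
  by_contra hc
  push_neg at hc
  have hV : 1 < V.ncard := (Set.one_lt_ncard (Set.toFinite V)).mpr
    (by obtain ⟨a, ha, b, hb, hab⟩ := hc.1; exact ⟨a, ha, b, hb, hab⟩)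
  have hW : 1 < W.ncard := (Set.one_lt_ncard (Set.toFinite W)).mpr
    (by obtain ⟨a, ha, b, hb, hab⟩ := hc.2; exact ⟨a, ha, b, hb, hab⟩)
  have h1 : (V ∪ W).ncard = V.ncard + W.ncard := Set.ncard_union_eq h
  have h2 : (V ∪ W).ncard ≤ (Set.univ : Set (Fin 3)).ncard :=
    Set.ncard_le_ncard (Set.subset_univ _)
  rw [Set.ncard_univ] at h2
  simp [Nat.card_eq_fintype_card] at h2
  omega

lemma T3_indep : SubgraphIndep T3 := by
  intro V W hdisj HV HW
  rcases one_subsingleton hdisj with hS | hS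
  · haveI := subsingleton_graph hS
    have hall : ∀ G : SimpleGraph (Fin 3), G.induce V = HV := fun G => Subsingleton.elim _ _
    rw [pr_congr T3 (P := fun G => G.induce V = HV ∧ G.induce W = HW)
        (Q := fun G => G.induce W = HW) (fun G => by simp [hall G]),
      pr_congr T3 (P := fun G => G.induce V = HV) (Q := fun _ => True)
        (fun G => by simp [hall G]),
      pr_T3_true, one_mul]
  · haveI := subsingleton_graph hS
    have hall : ∀ G : SimpleGraph (Fin 3), G.induce W = HW := fun G => Subsingleton.elim _ _
    rw [pr_congr T3 (P := fun G => G.induce V = HV ∧ G.induce W = HW)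
        (Q := fun G => G.induce V = HV) (fun G => by simp [hall G]),
      pr_congr T3 (P := fun G => G.induce W = HW) (Q := fun _ => True)
        (fun G => by simp [hall G]),
      pr_T3_true, mul_one]

/-! ### Part 2: no coloring model -/

section Part2
variable (M : ColoringModel 3)

lemma wt_nonneg (ω : ∀ v, M.Ω v) : 0 ≤ ∏ v, M.p v (ω v) :=
  Finset.prod_nonneg fun v _ => M.nonneg v (ω v)

lemma term_nonneg (G : SimpleGraph (Fin 3)) (ω : ∀ v, M.Ω v) :
    (0:ℝ) ≤ if M.graph ω = G then ∏ v, M.p v (ω v) else 0 := by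
  split
  · exact wt_nonneg M ω
  · exact le_refl 0

lemma support_card (h : ∀ G, M.dist G = T3 G) (ω : ∀ v, M.Ω v)
    (hp : 0 < ∏ v, M.p v (ω v)) : Nat.card (M.graph ω).edgeSet = 1 := by
  letI := M.fin
  by_contra hc
  have h0 : M.dist (M.graph ω) = 0 := by rw [h]; unfold T3; rw [if_neg hc]
  have hle : ∏ v, M.p v (ω v) ≤ M.dist (M.graph ω) := by
    unfold ColoringModel.dist ColoringModel.pr
    have := Finset.single_le_sum
      (f := fun ω' : ∀ v, M.Ω v => if M.graph ω' = M.graph ω then ∏ v, M.p v (ω' v) else 0)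
      (fun ω' _ => term_nonneg M (M.graph ω) ω') (Finset.mem_univ ω)
    simpa using this
  linarith

lemma exists_support (h : ∀ G, M.dist G = T3 G) (a b : Fin 3) (hab : a ≠ b) :
    ∃ ω : ∀ v, M.Ω v, M.graph ω = Egr a b ∧ ∀ v, 0 < M.p v (ω v) := by
  letI := M.fin
  have hd : M.dist (Egr a b) = 1/3 := by
    rw [h]; unfold T3; rw [if_pos (Egr_card a b hab)]
  have hne : M.dist (Egr a b) ≠ 0 := by rw [hd]; norm_num
  unfold ColoringModel.dist ColoringModel.pr at hne
  obtain ⟨ω, _, hω⟩ := Finset.exists_ne_zero_of_sum_ne_zero hne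
  by_cases hg : M.graph ω = Egr a b
  · refine ⟨ω, hg, ?_⟩
    rw [if_pos hg] at hω
    intro v
    rcases lt_or_eq_of_le (M.nonneg v (ω v)) with h' | h'
    · exact h'
    · exact absurd (Finset.prod_eq_zero (Finset.mem_univ v) h'.symm) hω
  · rw [if_neg hg] at hω; exact absurd rfl hω

lemma graph_adj (ω : ∀ v, M.Ω v) {u v : Fin 3} (h : u ≠ v) :
    (M.graph ω).Adj u v ↔ M.f u v (ω u) (ω v) = true := by
  simp [ColoringModel.graph, h]

lemma f_true_of_graph_eq {σ : ∀ v, M.Ω v} {a b : Fin 3} (hg : M.graph σ = Egr a b)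
    {u v : Fin 3} (huv : u ≠ v) (he : s(u,v) = s(a,b)) :
    M.f u v (σ u) (σ v) = true := by
  rw [← graph_adj M σ huv, hg, Egr_adj]
  exact ⟨he, huv⟩

lemma f_false_of_graph_eq {σ : ∀ v, M.Ω v} {a b : Fin 3} (hg : M.graph σ = Egr a b)
    {u v : Fin 3} (huv : u ≠ v) (he : s(u,v) ≠ s(a,b)) :
    M.f u v (σ u) (σ v) = false := by
  have hna : ¬ (M.graph σ).Adj u v := by
    rw [hg, Egr_adj]; rintro ⟨h1, _⟩; exact he h1
  rw [graph_adj M σ huv] at hna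
  simpa using hna

/-- Mix three colorings, taking the colors of vertices 0, 1, 2 from `a`, `b`, `c`
respectively. -/
def mixc (a b c : ∀ v, M.Ω v) : ∀ v, M.Ω v := fun v =>
  match v with
  | 0 => a 0
  | 1 => b 1
  | 2 => c 2

@[simp] lemma mixc_zero (a b c : ∀ v, M.Ω v) : mixc M a b c 0 = a 0 := rfl
@[simp] lemma mixc_one (a b c : ∀ v, M.Ω v) : mixc M a b c 1 = b 1 := rfl
@[simp] lemma mixc_two (a b c : ∀ v, M.Ω v) : mixc M a b c 2 = c 2 := rfl

lemma mixc_pos {a b c : ∀ v, M.Ω v} (ha : ∀ v, 0 < M.p v (a v)) (hb : ∀ v, 0 < M.p v (b v))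
    (hc : ∀ v, 0 < M.p v (c v)) : 0 < ∏ v, M.p v (mixc M a b c v) := by
  apply Finset.prod_pos
  intro v _
  fin_cases v
  · exact ha 0
  · exact hb 1
  · exact hc 2

end Part2

lemma not_coloring : ¬ ∃ M : ColoringModel 3, ∀ G, M.dist G = T3 G := by
  rintro ⟨M, h⟩
  obtain ⟨ωa, ha, hpa⟩ := exists_support M h 0 1 (by decide)
  obtain ⟨ωb, hb, hpb⟩ := exists_support M h 0 2 (by decide)
  obtain ⟨ωc, hc, hpc⟩ := exists_support M h 1 2 (by decide)
  have fa : M.f 0 1 (ωa 0) (ωa 1) = true := f_true_of_graph_eq M ha (by decide) rfl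
  have fb : M.f 0 2 (ωb 0) (ωb 2) = true := f_true_of_graph_eq M hb (by decide) rfl
  have fc : M.f 1 2 (ωc 1) (ωc 2) = true := f_true_of_graph_eq M hc (by decide) rfl
  -- t1 = (ωb 0, ωa 1, ωb 2) : must be Egr 0 2, giving f 0 1 (ωb 0) (ωa 1) = false
  have hF01 : M.f 0 1 (ωb 0) (ωa 1) = false := by
    have hcard := support_card M h (mixc M ωb ωa ωb) (mixc_pos M hpb hpa hpb)
    rcases (card_one_iff _).mp hcard with hg | hg | hg
    · have := f_false_of_graph_eq M hg (u := 0) (v := 2) (by decide) (by decide)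
      simp only [mixc_zero, mixc_one, mixc_two] at this
      rw [fb] at this; exact absurd this (by decide)
    · exact f_false_of_graph_eq M hg (u := 0) (v := 1) (by decide) (by decide)
    · have := f_false_of_graph_eq M hg (u := 0) (v := 2) (by decide) (by decide)
      simp only [mixc_zero, mixc_one, mixc_two] at this
      rw [fb] at this; exact absurd this (by decide)
  -- t2 = (ωa 0, ωa 1, ωc 2) : must be Egr 0 1, giving f 1 2 (ωa 1) (ωc 2) = false
  have hF12 : M.f 1 2 (ωa 1) (ωc 2) = false := by
    have hcard := support_card M h (mixc M ωa ωa ωc) (mixc_pos M hpa hpa hpc)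
    rcases (card_one_iff _).mp hcard with hg | hg | hg
    · exact f_false_of_graph_eq M hg (u := 1) (v := 2) (by decide) (by decide)
    · have := f_false_of_graph_eq M hg (u := 0) (v := 1) (by decide) (by decide)
      simp only [mixc_zero, mixc_one, mixc_two] at this
      rw [fa] at this; exact absurd this (by decide)
    · have := f_false_of_graph_eq M hg (u := 0) (v := 1) (by decide) (by decide)
      simp only [mixc_zero, mixc_one, mixc_two] at this
      rw [fa] at this; exact absurd this (by decide)
  -- t3 = (ωb 0, ωc 1, ωc 2) : must be Egr 1 2, giving f 0 2 (ωb 0) (ωc 2) = false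
  have hF02 : M.f 0 2 (ωb 0) (ωc 2) = false := by
    have hcard := support_card M h (mixc M ωb ωc ωc) (mixc_pos M hpb hpc hpc)
    rcases (card_one_iff _).mp hcard with hg | hg | hg
    · have := f_false_of_graph_eq M hg (u := 1) (v := 2) (by decide) (by decide)
      simp only [mixc_zero, mixc_one, mixc_two] at this
      rw [fc] at this; exact absurd this (by decide)
    · have := f_false_of_graph_eq M hg (u := 1) (v := 2) (by decide) (by decide)
      simp only [mixc_zero, mixc_one, mixc_two] at this
      rw [fc] at this; exact absurd this (by decide)
    · exact f_false_of_graph_eq M hg (u := 0) (v := 2) (by decide) (by decide)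
  -- σ = (ωb 0, ωa 1, ωc 2) : must have exactly one edge, but all three f's are false
  have hcard := support_card M h (mixc M ωb ωa ωc) (mixc_pos M hpb hpa hpc)
  rcases (card_one_iff _).mp hcard with hg | hg | hg
  · have := f_true_of_graph_eq M hg (u := 0) (v := 1) (by decide) rfl
    simp only [mixc_zero, mixc_one, mixc_two] at this
    rw [hF01] at this; exact absurd this (by decide)
  · have := f_true_of_graph_eq M hg (u := 0) (v := 2) (by decide) rfl
    simp only [mixc_zero, mixc_one, mixc_two] at this
    rw [hF02] at this; exact absurd this (by decide)
  · have := f_true_of_graph_eq M hg (u := 1) (v := 2) (by decide) rfl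
    simp only [mixc_zero, mixc_one, mixc_two] at this
    rw [hF12] at this; exact absurd this (by decide)

theorem T3_subgraph_indep_not_coloring :
    SubgraphIndep T3 ∧ ¬ ∃ M : ColoringModel 3, ∀ G, M.dist G = T3 G :=
  ⟨T3_indep, not_coloring⟩
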